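/- For every integer m ≥ 1, the spaces h_0(Δ^(m)) and h_c(Δ^(m)), each equipped with the metric induced by the norm ‖x‖ = sup_n |(H^(m)x)_n|, are separable. -/
import Mathlib


open Filter Finset Topology

/- Real sequences are modelled as functions `ℕ → ℝ`, where the Lean index `n : ℕ`
corresponds to the paper's index `n + 1` (the paper indexes sequences by `k ≥ 1`).
Thus the paper's entry `h_{nk} = ∑_{i=k}^{n} (-1)^{i-k} C(m, i-k) / (n+i-1)`
(for `1 ≤ k ≤ n`) becomes, with 0-based indices,
`hMat m n k = ∑_{i ∈ Icc k n} (-1)^{i-k} C(m, i-k) / (n+i+1)`. -/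

/-- The entries of the triangle matrix `H^(m) = H Δ^(m)` (0-based indexing). -/
noncomputable def hMat (m n k : ℕ) : ℝ :=
  ∑ i ∈ Finset.Icc k n, (-1 : ℝ) ^ (i - k) * (Nat.choose m (i - k) : ℝ) / ((n + i + 1 : ℕ) : ℝ)

/-- The `H^(m)`-transform of a sequence: `(H^(m) x)_n = ∑_{k=1}^{n} h_{nk} x_k`. -/
noncomputable def hTrans (m : ℕ) (x : ℕ → ℝ) (n : ℕ) : ℝ :=
  ∑ k ∈ Finset.range (n + 1), hMat m n k * x k

/-- `h_0(Δ^(m))`: sequences whose `H^(m)`-transform tends to `0`. -/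
def hZero (m : ℕ) : Set (ℕ → ℝ) := {x | Tendsto (hTrans m x) atTop (𝓝 0)}

/-- `h_c(Δ^(m))`: sequences whose `H^(m)`-transform converges. -/
def hConv (m : ℕ) : Set (ℕ → ℝ) := {x | ∃ L : ℝ, Tendsto (hTrans m x) atTop (𝓝 L)}

/-- `h_∞(Δ^(m))`: sequences whose `H^(m)`-transform is bounded. -/
def hBdd (m : ℕ) : Set (ℕ → ℝ) := {x | ∃ M : ℝ, ∀ n, |hTrans m x n| ≤ M}

/-- The space `c₀` of null real sequences. -/
def c0Seq : Set (ℕ → ℝ) := {y | Tendsto y atTop (𝓝 0)}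

/-- The space `c` of convergent real sequences. -/
def cSeq : Set (ℕ → ℝ) := {y | ∃ L : ℝ, Tendsto y atTop (𝓝 L)}

/-- The space `ℓ∞` of bounded real sequences. -/
def linfSeq : Set (ℕ → ℝ) := {y | ∃ M : ℝ, ∀ n, |y n| ≤ M}

/-- The sup norm `‖y‖ = sup_n |y_n|` of a sequence. -/
noncomputable def supNorm (y : ℕ → ℝ) : ℝ := ⨆ n, |y n|

/-- The norm `‖x‖ = sup_n |(H^(m) x)_n|` on the Hilbert difference sequence spaces. -/
noncomputable def hNorm (m : ℕ) (x : ℕ → ℝ) : ℝ := supNorm (hTrans m x)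

lemma hMat_diag (m n : ℕ) : hMat m n n = 1 / ((2 * n + 1 : ℕ) : ℝ) := by
  simp [hMat, Finset.Icc_self]; ring_nf

lemma hMat_diag_ne (m n : ℕ) : hMat m n n ≠ 0 := by
  rw [hMat_diag]; positivity

noncomputable def invT (m : ℕ) (y : ℕ → ℝ) : ℕ → ℝ
  | n => (y n - ∑ k ∈ (Finset.range n).attach, hMat m n k * invT m y k) / hMat m n n
  decreasing_by exact Finset.mem_range.mp k.2

lemma hTrans_invT (m : ℕ) (y : ℕ → ℝ) : hTrans m (invT m y) = y := by
  funext n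
  rw [hTrans, Finset.sum_range_succ, invT, mul_div_cancel₀ _ (hMat_diag_ne m n),
    ← Finset.sum_attach (Finset.range n) (fun k => hMat m n k * invT m y k)]
  ring

lemma hTrans_sub_invT (m : ℕ) (x q : ℕ → ℝ) (n : ℕ) :
    hTrans m (x - invT m q) n = hTrans m x n - q n := by
  have : hTrans m (x - invT m q) n = hTrans m x n - hTrans m (invT m q) n := by
    simp [hTrans, mul_sub, Finset.sum_sub_distrib]
  rw [this, hTrans_invT]

lemma approx_key (m : ℕ) (x q : ℕ → ℝ) (ε : ℝ) (hε : 0 < ε)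
    (h : ∀ n, |hTrans m x n - q n| ≤ ε / 2) : hNorm m (x - invT m q) < ε := by
  have hle : hNorm m (x - invT m q) ≤ ε / 2 := by
    simp only [hNorm, supNorm]
    refine Real.iSup_le (fun n => ?_) (by positivity)
    rw [hTrans_sub_invT]; exact h n
  linarith

/-- `h_0(Δ^(m))` and `h_c(Δ^(m))`, with the metric induced by `‖x‖ = sup_n |(H^(m) x)_n|`,
are separable. -/
theorem hilbert_diff_separable (m : ℕ) (hm : 1 ≤ m) :
    (∃ D : Set (ℕ → ℝ), D.Countable ∧ D ⊆ hZero m ∧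
      ∀ x ∈ hZero m, ∀ ε : ℝ, 0 < ε → ∃ d ∈ D, hNorm m (x - d) < ε) ∧
    (∃ D : Set (ℕ → ℝ), D.Countable ∧ D ⊆ hConv m ∧
      ∀ x ∈ hConv m, ∀ ε : ℝ, 0 < ε → ∃ d ∈ D, hNorm m (x - d) < ε) := by
  constructor
  · refine ⟨Set.range (fun f : ℕ →₀ ℚ => invT m (fun n => ((f n : ℚ) : ℝ))),
      Set.countable_range _, ?_, ?_⟩
    · rintro d ⟨f, rfl⟩
      show Tendsto _ atTop (𝓝 0)
      rw [hTrans_invT]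
      have : ∀ᶠ n in atTop, ((f n : ℚ) : ℝ) = 0 := by
        filter_upwards [eventually_ge_atTop (f.support.sup id + 1)] with n hn
        have : n ∉ f.support := by
          intro hmem
          have := Finset.le_sup (f := id) hmem
          simp only [id] at this
          omega
        simp [Finsupp.notMem_support_iff.mp this]
      exact tendsto_const_nhds.congr' (this.mono fun n h => h.symm)
    · intro x hx ε hε
      have hx' : Tendsto (hTrans m x) atTop (𝓝 0) := hx
      obtain ⟨N, hN⟩ := (Metric.tendsto_atTop.mp hx') (ε / 2) (by positivity)
      have hr : ∀ n, ∃ r : ℚ, |hTrans m x n - (r : ℝ)| < ε / 2 :=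
        fun n => exists_rat_near _ (by positivity)
      choose r hrr using hr
      set f : ℕ →₀ ℚ := Finsupp.onFinset (Finset.range N)
        (fun n => if n < N then r n else 0)
        (by intro a ha; simp only [Finset.mem_range]; by_contra h; simp [h] at ha) with hf
      refine ⟨invT m (fun n => ((f n : ℚ) : ℝ)), ⟨f, rfl⟩, ?_⟩
      apply approx_key m x _ ε hε
      intro n
      have hfn : f n = if n < N then r n else 0 := rfl
      rw [hfn]
      by_cases h : n < N
      · simp only [h, if_true]
        exact (hrr n).le
      · simp only [h, if_false, Rat.cast_zero, sub_zero]
        have := hN n (by omega)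
        rw [Real.dist_eq, sub_zero] at this
        exact this.le
  · refine ⟨Set.range (fun p : (ℕ →₀ ℚ) × ℚ =>
      invT m (fun n => ((p.1 n : ℚ) : ℝ) + (p.2 : ℝ))), Set.countable_range _, ?_, ?_⟩
    · rintro d ⟨⟨f, c⟩, rfl⟩
      refine ⟨(c : ℝ), ?_⟩
      rw [hTrans_invT]
      have : ∀ᶠ n in atTop, ((f n : ℚ) : ℝ) + (c : ℝ) = (c : ℝ) := by
        filter_upwards [eventually_ge_atTop (f.support.sup id + 1)] with n hn
        have : n ∉ f.support := by
          intro hmem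
          have := Finset.le_sup (f := id) hmem
          simp only [id] at this
          omega
        simp [Finsupp.notMem_support_iff.mp this]
      exact tendsto_const_nhds.congr' (this.mono fun n h => h.symm)
    · rintro x ⟨L, hL⟩ ε hε
      obtain ⟨c, hc⟩ := exists_rat_near L (show (0:ℝ) < ε / 4 by positivity)
      obtain ⟨N, hN⟩ := (Metric.tendsto_atTop.mp hL) (ε / 4) (by positivity)
      have hr : ∀ n, ∃ r : ℚ, |hTrans m x n - (r : ℝ)| < ε / 2 :=
        fun n => exists_rat_near _ (by positivity)
      choose r hrr using hr
      set f : ℕ →₀ ℚ := Finsupp.onFinset (Finset.range N)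
        (fun n => if n < N then r n - c else 0)
        (by intro a ha; simp only [Finset.mem_range]; by_contra h; simp [h] at ha) with hf
      refine ⟨invT m (fun n => ((f n : ℚ) : ℝ) + (c : ℝ)), ⟨(f, c), rfl⟩, ?_⟩
      apply approx_key m x _ ε hε
      intro n
      have hfn : f n = if n < N then r n - c else 0 := rfl
      rw [hfn]
      by_cases h : n < N
      · simp only [h, if_true]
        push_cast
        have := hrr n
        have : |hTrans m x n - ((r n : ℝ) - (c:ℝ) + (c:ℝ))| < ε / 2 := by
          rw [sub_add_cancel]; exact hrr n
        linarith [this.le]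
      · simp only [h, if_false, Rat.cast_zero, zero_add]
        have h1 := hN n (by omega)
        rw [Real.dist_eq] at h1
        calc |hTrans m x n - (c:ℝ)| ≤ |hTrans m x n - L| + |L - (c:ℝ)| := by
              have := abs_sub_abs_le_abs_sub (hTrans m x n - L) ((c:ℝ) - L)
              exact abs_sub_le _ L _
          _ ≤ ε / 2 := by linarith [h1.le, hc.le]
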